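/- arXiv:1107.4067 — 2 statements merged into one kernel-verified Lean document; each statement's English description precedes it below -/
import Mathlib

section
/- For every finite connected simple graph G = (V, E) and every nonempty set V₁ ⊆ V, there exists a partition 𝒱 of V such that V₁ is one of the blocks of 𝒱, every other block of 𝒱 is contained in a single distance layer L_k = {v ∈ V : dist(v, V₁) = k} for some k ≥ 1, and the quotient graph of G by 𝒱 is a tree (i.e., 𝒱 is a block-tree of G with root cluster V₁). -/
/-- The distance from a vertex `v` to a set of vertices `S`:
the minimum over `u ∈ S` of the graph distance between `u` and `v`. -/
noncomputable def distToSet {V : Type*} (G : SimpleGraph V) (S : Set V) (v : V) : ℕ :=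
  sInf {d : ℕ | ∃ u ∈ S, G.dist u v = d}

/-- The quotient graph of `G` by a partition `P` of its vertex set: the vertices are the
blocks of `P`, and distinct blocks `A`, `B` are adjacent iff some `u ∈ A` and `v ∈ B`
are adjacent in `G`. -/
def quotGraphPart {V : Type*} (G : SimpleGraph V) (P : Set (Set V)) : SimpleGraph P where
  Adj A B := A ≠ B ∧ ∃ u ∈ (A : Set V), ∃ v ∈ (B : Set V), G.Adj u v
  symm := by
    refine ⟨?_⟩
    rintro A B ⟨hne, u, hu, v, hv, huv⟩
    exact ⟨hne.symm, v, hv, u, hu, huv.symm⟩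
  loopless := by refine ⟨?_⟩; rintro A ⟨hne, -⟩; exact hne rfl

/-- The "line" graph on `ℕ`: `a` and `b` adjacent iff they differ by one. -/
def lineN : SimpleGraph ℕ where
  Adj a b := a + 1 = b ∨ b + 1 = a
  symm := by refine ⟨?_⟩; rintro a b (h | h) <;> [right; left] <;> exact h
  loopless := by refine ⟨?_⟩; rintro a (h | h) <;> omega

lemma lineN_reach_le {a x y : ℕ}
    (p : (lineN \ SimpleGraph.fromEdgeSet {s(a, a + 1)}).Walk x y)
    (hx : x ≤ a) : y ≤ a := by
  induction p with
  | nil => exact hx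
  | @cons u w z hadj p ih =>
    apply ih
    rw [SimpleGraph.sdiff_adj, SimpleGraph.fromEdgeSet_adj] at hadj
    obtain ⟨huw, hnot⟩ := hadj
    have hne : u ≠ w := lineN.ne_of_adj huw
    have hthis : s(u, w) ≠ s(a, a + 1) := fun h => hnot ⟨by simp [h], hne⟩
    rcases huw with h1 | h1
    · rcases eq_or_lt_of_le hx with rfl | hlt
      · exact absurd (by rw [← h1]) hthis
      · omega
    · omega

lemma lineN_acyclic : lineN.IsAcyclic := by
  rw [SimpleGraph.isAcyclic_iff_forall_adj_isBridge]
  intro v w hvw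
  have key : ∀ a : ℕ, ¬ (lineN \ SimpleGraph.fromEdgeSet {s(a, a + 1)}).Reachable a (a + 1) := by
    rintro a ⟨p⟩
    have := lineN_reach_le p le_rfl
    omega
  rcases hvw with h | h
  · subst h
    rw [SimpleGraph.isBridge_iff]
    exact key v
  · subst h
    rw [Sym2.eq_swap, SimpleGraph.isBridge_iff]
    exact key w

lemma isAcyclic_of_injective_hom {α β : Type*} {G : SimpleGraph α} {H : SimpleGraph β}
    (f : G →g H) (hf : Function.Injective f) (hH : H.IsAcyclic) : G.IsAcyclic :=
  fun _ c hc => hH (c.map f) (hc.map hf)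

/-- For every finite connected simple graph `G` and every nonempty
`V₁ ⊆ V`, there is a partition `𝒱` of `V` such that `V₁` is a block of `𝒱`, every
other block is contained in a single distance layer `{v | dist(v, V₁) = k}` for some
`k ≥ 1`, and the quotient graph of `G` by `𝒱` is a tree (a block-tree with root
cluster `V₁`). -/
theorem exists_block_tree {V : Type*} [Fintype V] (G : SimpleGraph V)
    (hconn : G.Connected) (V₁ : Set V) (hne : V₁.Nonempty) :
    ∃ 𝒱 : Set (Set V), Setoid.IsPartition 𝒱 ∧ V₁ ∈ 𝒱 ∧
      (∀ A ∈ 𝒱, A ≠ V₁ → ∃ k : ℕ, 1 ≤ k ∧ A ⊆ {v : V | distToSet G V₁ v = k}) ∧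
      (quotGraphPart G 𝒱).IsTree := by
  classical
  set d : V → ℕ := distToSet G V₁ with hd
  have hsetne : ∀ v, {k : ℕ | ∃ u ∈ V₁, G.dist u v = k}.Nonempty := by
    intro v
    obtain ⟨u, hu⟩ := hne
    exact ⟨G.dist u v, u, hu, rfl⟩
  have hattain : ∀ v, ∃ u ∈ V₁, G.dist u v = d v := fun v => Nat.sInf_mem (hsetne v)
  have hle : ∀ v, ∀ u ∈ V₁, d v ≤ G.dist u v := fun v u hu => Nat.sInf_le ⟨u, hu, rfl⟩
  have h0 : ∀ v, d v = 0 ↔ v ∈ V₁ := by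
    intro v
    constructor
    · intro h
      obtain ⟨u, hu, hdu⟩ := hattain v
      rw [h] at hdu
      rwa [(hconn.dist_eq_zero_iff).mp hdu] at hu
    · intro hv
      exact Nat.le_zero.mp (le_of_le_of_eq (hle v v hv) (SimpleGraph.dist_self))
  have hadj : ∀ u v : V, G.Adj u v → d v ≤ d u + 1 := by
    intro u v huv
    obtain ⟨w, hw, hdw⟩ := hattain u
    calc d v ≤ G.dist w v := hle v w hw
      _ ≤ G.dist w u + G.dist u v := hconn.dist_triangle
      _ ≤ d u + 1 := by
          rw [hdw, SimpleGraph.dist_eq_one_iff_adj.mpr huv]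
  have hdown : ∀ (v : V) (k : ℕ), d v = k + 1 → ∃ u, G.Adj u v ∧ d u = k := by
    intro v k hv
    obtain ⟨w, hw, hdw⟩ := hattain v
    rw [hv] at hdw
    obtain ⟨p, hp⟩ := (hconn w v).exists_walk_length_eq_dist
    rw [hdw] at hp
    have hq := p.reverse
    have hql : p.reverse.length = k + 1 := by rw [SimpleGraph.Walk.length_reverse, hp]
    have hvw : v ≠ w := by
      intro h; subst h
      simp [SimpleGraph.dist_self] at hdw
    obtain ⟨u, hvu, q, hq⟩ := SimpleGraph.Walk.exists_eq_cons_of_ne hvw p.reverse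
    have hqlen : q.length = k := by
      rw [hq, SimpleGraph.Walk.length_cons] at hql; omega
    refine ⟨u, hvu.symm, le_antisymm ?_ ?_⟩
    · calc d u ≤ G.dist w u := hle u w hw
        _ = G.dist u w := SimpleGraph.dist_comm
        _ ≤ q.length := SimpleGraph.dist_le q
        _ = k := hqlen
    · have := hadj u v hvu.symm
      omega
  set L : ℕ → Set V := fun k => {v | d v = k} with hL
  set 𝒱 : Set (Set V) := {A | ∃ k, A = L k ∧ (L k).Nonempty} with h𝒱
  have hLmem : ∀ {v k}, v ∈ L k → d v = k := fun h => h
  have hLne : ∀ j k, j ≠ k → (L j).Nonempty → L j ≠ L k := by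
    intro j k hjk ⟨v, hv⟩ heq
    have : v ∈ L k := heq ▸ hv
    exact hjk ((hLmem hv).symm.trans (hLmem this))
  have hV₁ : V₁ = L 0 := by
    ext v; simp only [hL, Set.mem_setOf_eq]
    exact (h0 v).symm
  have hV₁mem : V₁ ∈ 𝒱 := ⟨0, hV₁, hV₁ ▸ hne⟩
  refine ⟨𝒱, ?_, hV₁mem, ?_, ?_⟩
  · constructor
    · rintro ⟨k, hk, v, hv⟩
      exact absurd (hk ▸ hv : v ∈ (∅ : Set V)) (Set.notMem_empty v)
    · intro v
      refine ⟨L (d v), ⟨⟨d v, rfl, v, rfl⟩, rfl⟩, ?_⟩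
      rintro A ⟨⟨k, rfl, hk⟩, hv⟩
      rw [hLmem hv]
  · rintro A ⟨k, rfl, hk⟩ hA
    refine ⟨k, ?_, fun v hv => hv⟩
    rcases Nat.eq_zero_or_pos k with rfl | h
    · exact absurd hV₁ (Ne.symm hA)
    · exact h
  · -- the quotient is a tree
    have hstep : ∀ k, ∀ hk1 : (L (k + 1)).Nonempty, ∃ hk : (L k).Nonempty,
        (quotGraphPart G 𝒱).Adj ⟨L (k + 1), ⟨k + 1, rfl, hk1⟩⟩ ⟨L k, ⟨k, rfl, hk⟩⟩ := by
      intro k hk1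
      obtain ⟨v, hv⟩ := hk1
      obtain ⟨u, huv, hu⟩ := hdown v k (hLmem hv)
      refine ⟨⟨u, hu⟩, ?_, v, hv, u, hu, huv.symm⟩
      intro h
      exact hLne (k + 1) k (by omega) ⟨v, hv⟩ (congrArg Subtype.val h)
    constructor
    · -- connected
      have reach0 : ∀ k (hk : (L k).Nonempty),
          (quotGraphPart G 𝒱).Reachable ⟨L k, ⟨k, rfl, hk⟩⟩ ⟨V₁, hV₁mem⟩ := by
        intro k
        induction k with
        | zero =>
          intro hk
          have : (⟨L 0, ⟨0, rfl, hk⟩⟩ : ↥𝒱) = ⟨V₁, hV₁mem⟩ := Subtype.ext hV₁.symm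
          rw [this]
        | succ k ih =>
          intro hk
          obtain ⟨hk', hadj'⟩ := hstep k hk
          exact (hadj'.reachable).trans (ih hk')
      have : Nonempty ↥𝒱 := ⟨⟨V₁, hV₁mem⟩⟩
      constructor
      intro A B
      obtain ⟨j, hAj, hAne⟩ := A.2
      obtain ⟨k, hBk, hBne⟩ := B.2
      have hA : A = ⟨L j, ⟨j, rfl, hAne⟩⟩ := Subtype.ext hAj
      have hB : B = ⟨L k, ⟨k, rfl, hBne⟩⟩ := Subtype.ext hBk
      rw [hA, hB]
      exact (reach0 j hAne).trans (reach0 k hBne).symm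
    · -- acyclic via injective hom to lineN
      have hchoose : ∀ A : ↥𝒱, (A : Set V) = L (Classical.choose A.2) ∧
          (L (Classical.choose A.2)).Nonempty := fun A => Classical.choose_spec A.2
      set f : ↥𝒱 → ℕ := fun A => Classical.choose A.2 with hf
      have hfinj : Function.Injective f := by
        intro A B h
        apply Subtype.ext
        rw [(hchoose A).1, (hchoose B).1]
        exact congrArg L h
      have hhom : ∀ A B : ↥𝒱, (quotGraphPart G 𝒱).Adj A B → lineN.Adj (f A) (f B) := by
        rintro A B ⟨hAB, u, hu, v, hv, huv⟩
        have hu' : d u = f A := hLmem ((hchoose A).1 ▸ hu)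
        have hv' : d v = f B := hLmem ((hchoose B).1 ▸ hv)
        have h1 := hadj u v huv
        have h2 := hadj v u huv.symm
        have hne' : f A ≠ f B := fun h => hAB (hfinj h)
        show f A + 1 = f B ∨ f B + 1 = f A
        omega
      exact isAcyclic_of_injective_hom ⟨f, fun {a b} h => hhom a b h⟩ hfinj lineN_acyclic
end

section
/- Let G = (V, E) be a finite simple graph, Ω_v a finite nonempty set for each v ∈ V, and p : (∏_{v∈V} Ω_v) → ℝ a function that factorizes over the cliques of G, i.e., p(x) = ∏_{C ∈ 𝒞} ψ_C(x_C) for a finite family 𝒞 of cliques of G and functions ψ_C depending only on x_C. Let 𝒱 be a partition of V whose quotient graph 𝒯 is a tree (a block-tree of G), let {i, j} be an edge of 𝒯, let 𝒜 be the clusters in the component of i in 𝒯 with the edge {i, j} removed and ℬ the clusters in the component of j. Then there exist functions f and g such that f depends only on the coordinates indexed by (∪_{A∈𝒜} A) ∪ j, g depends only on the coordinates indexed by (∪_{B∈ℬ} B) ∪ i, and p(x) = f(x) · g(x) for all x. -/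
section Aux

variable {ι : Type*} (T : SimpleGraph ι)

lemma aux_cover_step (i j : ι) {a b : ι} (hab : T.Adj a b)
    (h : (T.deleteEdges {s(i,j)}).Reachable i a ∨ (T.deleteEdges {s(i,j)}).Reachable j a) :
    (T.deleteEdges {s(i,j)}).Reachable i b ∨ (T.deleteEdges {s(i,j)}).Reachable j b := by
  by_cases he : s(a, b) = s(i, j)
  · rw [Sym2.eq_iff] at he
    rcases he with ⟨rfl, rfl⟩ | ⟨rfl, rfl⟩
    · right; exact SimpleGraph.Reachable.refl _
    · left; exact SimpleGraph.Reachable.refl _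
  · have hadj : (T.deleteEdges {s(i,j)}).Adj a b := by
      rw [SimpleGraph.deleteEdges_adj]
      exact ⟨hab, by simpa using he⟩
    rcases h with h | h
    · exact Or.inl (h.trans hadj.reachable)
    · exact Or.inr (h.trans hadj.reachable)

lemma aux_cover (hconn : T.Connected) (i j : ι) (a : ι) :
    (T.deleteEdges {s(i,j)}).Reachable i a ∨ (T.deleteEdges {s(i,j)}).Reachable j a := by
  obtain ⟨w⟩ := hconn i a
  have : ∀ {b c : ι} (w : T.Walk b c),
      ((T.deleteEdges {s(i,j)}).Reachable i b ∨ (T.deleteEdges {s(i,j)}).Reachable j b) →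
      ((T.deleteEdges {s(i,j)}).Reachable i c ∨ (T.deleteEdges {s(i,j)}).Reachable j c) := by
    intro b c w
    induction w with
    | nil => exact id
    | cons hadj w ih => exact fun h => ih (aux_cover_step T i j hadj h)
  exact this w (Or.inl (SimpleGraph.Reachable.refl _))

lemma aux_disjoint (hT : T.IsTree) {i j : ι} (hij : T.Adj i j) (a : ι)
    (hi : (T.deleteEdges {s(i,j)}).Reachable i a) :
    ¬ (T.deleteEdges {s(i,j)}).Reachable j a := by
  intro hj
  have hbridge : T.IsBridge s(i, j) :=
    (SimpleGraph.isAcyclic_iff_forall_adj_isBridge.mp hT.IsAcyclic) hij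
  exact (SimpleGraph.isBridge_iff.mp hbridge) (hi.trans hj.symm)

end Aux




/-- The quotient graph of `G` by the partition of `V` into the fibers of a surjective
map `π : V → ι` (the clusters): distinct clusters `a`, `b` are adjacent iff some
vertex of cluster `a` is adjacent in `G` to some vertex of cluster `b`. -/
def quotGraph {V ι : Type*} (G : SimpleGraph V) (π : V → ι) : SimpleGraph ι where
  Adj a b := a ≠ b ∧ ∃ u v : V, π u = a ∧ π v = b ∧ G.Adj u v
  symm := by
    constructor
    rintro a b ⟨hne, u, v, hu, hv, huv⟩
    exact ⟨hne.symm, v, u, hv, hu, huv.symm⟩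
  loopless := by constructor; rintro a ⟨hne, -⟩; exact hne rfl

/-- Let `G` be a finite simple graph, `Ω v` finite nonempty sets, and
`p : (∀ v, Ω v) → ℝ` a function factorizing over the cliques of `G`
(`p x = ∏ c, ψ c x`, each clique potential `ψ c` depending only on the coordinates in
the clique `Cl c`).  Let the partition given by a surjective `π : V → ι` have quotient
graph `𝒯 = quotGraph G π` a tree (a block-tree of `G`), and let `{i, j}` be an edge of
`𝒯`.  With `𝒜` the clusters in the component of `i` in `𝒯` minus the edge `{i, j}` and
`ℬ` those in the component of `j`, there exist `f`, `g` such that `f` depends only on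
the coordinates indexed by `(⋃ 𝒜) ∪ (cluster j)`, `g` depends only on those indexed by
`(⋃ ℬ) ∪ (cluster i)`, and `p x = f x * g x` for all `x`. -/
theorem block_tree_edge_factorization {V ι : Type*} [Fintype V]
    (Ω : V → Type*) [∀ v, Fintype (Ω v)] [∀ v, Nonempty (Ω v)]
    (G : SimpleGraph V) (π : V → ι) (hπ : Function.Surjective π)
    (hT : (quotGraph G π).IsTree)
    (p : (∀ v : V, Ω v) → ℝ)
    (κ : Type*) [Fintype κ] (Cl : κ → Set V) (ψ : κ → (∀ v : V, Ω v) → ℝ)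
    (hCl : ∀ c : κ, G.IsClique (Cl c))
    (hψ : ∀ (c : κ) (x y : ∀ v : V, Ω v), (∀ v ∈ Cl c, x v = y v) → ψ c x = ψ c y)
    (hp : ∀ x : ∀ v : V, Ω v, p x = ∏ c : κ, ψ c x)
    (i j : ι) (hij : (quotGraph G π).Adj i j) :
    ∃ f g : (∀ v : V, Ω v) → ℝ,
      (∀ x y : ∀ v : V, Ω v,
        (∀ v : V, (((quotGraph G π).deleteEdges {s(i, j)}).Reachable i (π v) ∨ π v = j) →
          x v = y v) → f x = f y) ∧
      (∀ x y : ∀ v : V, Ω v,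
        (∀ v : V, (((quotGraph G π).deleteEdges {s(i, j)}).Reachable j (π v) ∨ π v = i) →
          x v = y v) → g x = g y) ∧
      ∀ x : ∀ v : V, Ω v, p x = f x * g x := by
  classical
  set T := quotGraph G π with hTdef
  set G' := T.deleteEdges {s(i,j)} with hG'
  have hcover : ∀ a : ι, G'.Reachable i a ∨ G'.Reachable j a :=
    aux_cover T hT.isConnected i j
  have hdisj := aux_disjoint T hT hij
  -- the two sides
  set SA : Set V := {v | G'.Reachable i (π v) ∨ π v = j} with hSA
  set SB : Set V := {v | G'.Reachable j (π v) ∨ π v = i} with hSB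
  -- each clique lies in one side
  have hclique : ∀ c : κ, ¬ (Cl c ⊆ SA) → Cl c ⊆ SB := by
    intro c hc v hv
    rw [Set.not_subset] at hc
    obtain ⟨u, hu, huA⟩ := hc
    have hunotA : ¬ G'.Reachable i (π u) ∧ π u ≠ j := by
      simpa [hSA, Set.mem_setOf_eq, not_or] using huA
    have huj : G'.Reachable j (π u) := (hcover (π u)).resolve_left hunotA.1
    have huni : π u ≠ i := fun h => hunotA.1 (h ▸ SimpleGraph.Reachable.refl _)
    by_cases hpv : π v = π u
    · exact Or.inl (hpv ▸ huj)
    · have hne : v ≠ u := fun h => hpv (h ▸ rfl)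
      have hadj : G.Adj u v := ((hCl c) hu hv (Ne.symm hne))
      have hTadj : T.Adj (π u) (π v) :=
        ⟨fun h => hpv h.symm, u, v, rfl, rfl, hadj⟩
      have hedge : s(π u, π v) ≠ s(i, j) := by
        intro h
        rw [Sym2.eq_iff] at h
        rcases h with ⟨h1, h2⟩ | ⟨h1, h2⟩
        · exact huni h1
        · exact hunotA.2 h1
      have hG'adj : G'.Adj (π u) (π v) := by
        rw [hG', SimpleGraph.deleteEdges_adj]
        exact ⟨hTadj, by simpa using hedge⟩
      exact Or.inl (huj.trans hG'adj.reachable)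
  set S : Finset κ := Finset.univ.filter (fun c => Cl c ⊆ SA) with hS
  refine ⟨fun x => ∏ c ∈ S, ψ c x, fun x => ∏ c ∈ Sᶜ, ψ c x, ?_, ?_, ?_⟩
  · intro x y hxy
    refine Finset.prod_congr rfl fun c hc => hψ c x y fun v hv => ?_
    rw [hS, Finset.mem_filter] at hc
    exact hxy v (hc.2 hv)
  · intro x y hxy
    refine Finset.prod_congr rfl fun c hc => hψ c x y fun v hv => ?_
    rw [Finset.mem_compl, hS, Finset.mem_filter] at hc
    have : v ∈ SB := hclique c (fun h => hc ⟨Finset.mem_univ c, h⟩) hv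
    exact hxy v this
  · intro x
    rw [hp x, hS, Finset.compl_filter, ← Finset.prod_filter_mul_prod_filter_not
      Finset.univ (fun c => Cl c ⊆ SA) (fun c => ψ c x)]
end
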